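/- Let a = (a₁,…,a_d) be a primitive positive integer vector and m₀,…,m_d positive labels with the m_i pairwise coprime and gcd(a_i, m_i) = 1 for i ≥ 1 (so the associated stack is a weighted projective stack). For I ⊆ {0,…,d} proper and nonempty with 0 ∈ I, let N_I = span{β(e_i) : i ∈ I} ⊆ ℤ^d where β(e₀) = -m₀a, β(e_j) = m_jε_j, and d_I = gcd(a_j : j ∉ I). Then Tor(ℤ^d/N_I) ≅ ℤ/( (∏_{i∈I} m_i)·d_I )ℤ, i.e. the torsion subgroup is cyclic of order d_I·∏_{i∈I} m_i. -/

import Mathlib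

open Matrix

/-- The homomorphism `β : ℤ^(d+1) → ℤ^d` of a labelled sheared simplex, as a matrix:
`β(e₀) = -m₀·(a₁,…,a_d)` and `β(e_j) = m_j·ε_j` for `j = 1,…,d`. -/
def shearedMatrix (d : ℕ) (m : Fin (d + 1) → ℕ) (a : Fin d → ℕ) :
    Matrix (Fin d) (Fin (d + 1)) ℤ :=
  fun i j => if j = 0 then -((m 0 : ℤ) * (a i : ℤ)) else if j = i.succ then (m j : ℤ) else 0

/-- `a₀ := 1`, `a_j` for `j ≥ 1`. -/
def aExt (d : ℕ) (a : Fin d → ℕ) : Fin (d + 1) → ℕ :=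
  fun j => Fin.cases 1 a j

namespace Stmt16

variable {d : ℕ} (m : Fin (d + 1) → ℕ) (a : Fin d → ℕ)

/-- column `j` of the sheared matrix -/
def colFn (j : Fin (d + 1)) : Fin d → ℤ := fun i => shearedMatrix d m a i j

lemma toLin'_single (j : Fin (d + 1)) :
    Matrix.toLin' (shearedMatrix d m a) (Pi.single j 1) = colFn m a j := by
  funext i
  simp [Matrix.toLin'_apply, Matrix.mulVec_single, colFn]

lemma colFn_succ (i : Fin d) : colFn m a i.succ = Pi.single i ((m i.succ : ℤ)) := by
  funext i'
  simp only [colFn, shearedMatrix, Fin.succ_ne_zero, if_false, Pi.single_apply,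
    Fin.succ_inj]
  by_cases h : i = i' <;> simp [h, eq_comm]

variable {I : Finset (Fin (d + 1))}

lemma sum_eval (h0 : 0 ∈ I) (c : Fin (d + 1) → ℤ) (i : Fin d) :
    (∑ j ∈ I, c j • colFn m a j) i
      = -(c 0 * ((m 0 : ℤ) * (a i : ℤ)))
        + (if i.succ ∈ I then c i.succ * (m i.succ : ℤ) else 0) := by
  classical
  rw [Finset.sum_apply, ← Finset.add_sum_erase _ _ h0]
  congr 1
  · simp [colFn, shearedMatrix, mul_comm]
  · rw [show (∑ j ∈ I.erase 0, (c j • colFn m a j) i)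
        = ∑ j ∈ I.erase 0, (if j = i.succ then c j * (m j : ℤ) else 0) from
      Finset.sum_congr rfl fun j hj => by
        have hj0 : j ≠ 0 := Finset.ne_of_mem_erase hj
        simp [colFn, shearedMatrix, hj0, mul_ite]]
    rw [Finset.sum_ite_eq' (I.erase 0) i.succ (fun j => c j * (m j : ℤ))]
    simp [Finset.mem_erase, Fin.succ_ne_zero]

lemma mem_span_iff (h0 : 0 ∈ I) (x : Fin d → ℤ) :
    x ∈ Submodule.span ℤ (colFn m a '' I) ↔
      ∃ c : Fin (d + 1) → ℤ, ∀ i,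
        x i = -(c 0 * ((m 0 : ℤ) * (a i : ℤ)))
          + (if i.succ ∈ I then c i.succ * (m i.succ : ℤ) else 0) := by
  classical
  constructor
  · intro hx
    let L : (Fin (d + 1) → ℤ) →ₗ[ℤ] (Fin d → ℤ) :=
      ∑ j ∈ I, LinearMap.smulRight (LinearMap.proj j) (colFn m a j)
    have hL : ∀ c, L c = ∑ j ∈ I, c j • colFn m a j := by
      intro c
      simp [L, LinearMap.sum_apply]
    have hle : Submodule.span ℤ (colFn m a '' I) ≤ LinearMap.range L := by
      rw [Submodule.span_le]
      rintro _ ⟨j, hj, rfl⟩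
      exact ⟨Pi.single j 1, by
        rw [hL, Finset.sum_congr rfl (fun j' (_ : j' ∈ I) => by
          simp only [Pi.single_apply, ite_smul, one_smul, zero_smul] :
          ∀ j' ∈ I, (Pi.single j 1 : Fin (d+1) → ℤ) j' • colFn m a j'
            = if j' = j then colFn m a j' else 0),
          Finset.sum_ite_eq' I j (fun j' => colFn m a j')]
        simp [Finset.mem_coe.mp hj]⟩
    obtain ⟨c, rfl⟩ := hle hx
    exact ⟨c, fun i => by rw [hL]; exact sum_eval m a h0 c i⟩
  · rintro ⟨c, hc⟩
    have : x = ∑ j ∈ I, c j • colFn m a j := by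
      funext i
      rw [hc i, sum_eval m a h0 c i]
    rw [this]
    exact Submodule.sum_mem _ fun j hj =>
      Submodule.smul_mem _ _ (Submodule.subset_span ⟨j, hj, rfl⟩)

lemma gcd_natCast {β : Type*} (s : Finset β) (f : β → ℕ) :
    s.gcd (fun j => (f j : ℤ)) = ((s.gcd f : ℕ) : ℤ) := by
  classical
  induction s using Finset.induction with
  | empty => simp
  | insert _ _ h ih =>
    rw [Finset.gcd_insert, Finset.gcd_insert, ih]
    simp [← Int.coe_gcd]
    rfl


variable {I : Finset (Fin (d + 1))} in
lemma key1 (hcop : ∀ i j, i ≠ j → Nat.Coprime (m i) (m j))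
    (hcop' : ∀ i : Fin d, Nat.Coprime (a i) (m i.succ))
    (ha : ∀ i, 0 < a i) (h0 : 0 ∈ I)
    (g : ℕ) (b : Fin (d + 1) → ℕ)
    (hab : ∀ i : Fin d, i.succ ∉ I → (a i) = g * b i.succ)
    (t₀ : Fin d) (ht₀ : t₀.succ ∉ I) (k : ℤ) :
    (k • (fun i => if i.succ ∈ I then 0 else (b i.succ : ℤ)) : Fin d → ℤ)
        ∈ Submodule.span ℤ (colFn m a '' I)
      ↔ ((m 0 : ℤ) * (∏ j ∈ I.erase 0, (m j : ℤ)) * (g : ℤ)) ∣ k := by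
  classical
  set P : ℤ := ∏ j ∈ I.erase 0, (m j : ℤ) with hP
  have hb₀pos : 0 < b t₀.succ := by
    rcases Nat.eq_zero_or_pos (b t₀.succ) with h | h
    · exfalso; have := hab t₀ ht₀; rw [h, mul_zero] at this
      exact (ha t₀).ne' this
    · exact h
  rw [mem_span_iff m a h0]
  constructor
  · rintro ⟨c, hc⟩
    -- from coordinate t₀ : k = -(c 0 * m₀ * g)
    have ht := hc t₀
    simp only [Pi.smul_apply, smul_eq_mul, if_neg ht₀] at ht
    have hat : ((a t₀ : ℤ)) = (g : ℤ) * (b t₀.succ : ℤ) := by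
      exact_mod_cast congrArg (Nat.cast : ℕ → ℤ) (hab t₀ ht₀)
    rw [hat] at ht
    have hk : k = -(c 0 * (m 0 : ℤ) * (g : ℤ)) := by
      have hbne : ((b t₀.succ : ℤ)) ≠ 0 := by exact_mod_cast hb₀pos.ne'
      apply mul_right_cancel₀ hbne
      rw [ht]; ring
    -- each m j (j ∈ I.erase 0) divides c 0
    have hdvd : ∀ j ∈ I.erase 0, (m j : ℤ) ∣ c 0 := by
      intro j hj
      obtain ⟨hj0, hjI⟩ := Finset.mem_erase.mp hj
      obtain ⟨i, rfl⟩ := Fin.eq_succ_of_ne_zero hj0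
      have hi := hc i
      simp only [Pi.smul_apply, smul_eq_mul, if_pos hjI] at hi
      have hdm : (m i.succ : ℤ) ∣ c 0 * ((m 0 : ℤ) * (a i : ℤ)) := by
        refine ⟨c i.succ, ?_⟩
        have : (0:ℤ) = -(c 0 * ((m 0:ℤ) * (a i:ℤ))) + c i.succ * (m i.succ : ℤ) := by
          simpa using hi
        linarith [this]
      refine (IsCoprime.dvd_of_dvd_mul_right ?_ hdm)
      refine IsCoprime.mul_right ?_ ?_
      · exact (Nat.isCoprime_iff_coprime.mpr (hcop 0 i.succ (Fin.succ_ne_zero i).symm)).symm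
      · exact (Nat.isCoprime_iff_coprime.mpr (hcop' i)).symm
    have hPdvd : P ∣ c 0 := by
      refine Finset.prod_dvd_of_coprime ?_ hdvd
      intro j hj j' hj' hne
      exact Nat.isCoprime_iff_coprime.mpr (hcop j j' hne)
    obtain ⟨e, he⟩ := hPdvd
    exact ⟨-e, by rw [hk, he]; ring⟩
  · rintro ⟨q, hq⟩
    refine ⟨fun j => Fin.cases (-(q * P))
      (fun i => -(q * ((m 0 : ℤ) * (a i : ℤ))
        * ∏ j' ∈ (I.erase 0).erase i.succ, (m j' : ℤ))) j, fun i => ?_⟩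
    simp only [Pi.smul_apply, smul_eq_mul, Fin.cases_zero, Fin.cases_succ]
    by_cases hi : i.succ ∈ I
    · rw [if_pos hi, if_pos hi, mul_zero]
      have hPe : (m i.succ : ℤ) * ∏ j' ∈ (I.erase 0).erase i.succ, (m j' : ℤ) = P := by
        exact Finset.mul_prod_erase (I.erase 0) (fun j => (m j : ℤ))
          (Finset.mem_erase.mpr ⟨Fin.succ_ne_zero i, hi⟩)
      rw [← hPe]; ring
    · rw [if_neg hi, if_neg hi, add_zero]
      have hat : ((a i : ℤ)) = (g : ℤ) * (b i.succ : ℤ) := by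
        exact_mod_cast congrArg (Nat.cast : ℕ → ℤ) (hab i hi)
      rw [hq, hat]; ring

end Stmt16


open Stmt16 in
/-- For a labelled sheared simplex satisfying the weighted-projective condition
(the `m_i` pairwise coprime and `gcd(a_i, m_i) = 1`), for `I ∋ 0` a proper nonempty subset
of `{0,…,d}`, the torsion subgroup of `ℤ^d/N_I` is cyclic of order `d_I·∏_{i∈I} m_i`. -/
theorem stmt_16 (d : ℕ) (m : Fin (d + 1) → ℕ) (a : Fin d → ℕ)
    (hm : ∀ i, 0 < m i) (ha : ∀ i, 0 < a i)
    (hprim : Finset.univ.gcd a = 1)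
    (hcop : ∀ i j, i ≠ j → Nat.Coprime (m i) (m j))
    (hcop' : ∀ i : Fin d, Nat.Coprime (a i) (m i.succ))
    (I : Finset (Fin (d + 1))) (h0 : 0 ∈ I) (hI : I ≠ Finset.univ) :
    Nonempty
      ((Submodule.torsion ℤ ((Fin d → ℤ) ⧸ Submodule.span ℤ
          ((fun i : Fin (d + 1) => Matrix.toLin' (shearedMatrix d m a) (Pi.single i 1)) '' I)))
        ≃+ ZMod ((∏ i ∈ I, m i) * Iᶜ.gcd (aExt d a))) := by
  classical
  rw [show (fun i : Fin (d + 1) => Matrix.toLin' (shearedMatrix d m a) (Pi.single i 1))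
      = colFn m a from funext (toLin'_single m a)]
  set N : Submodule ℤ (Fin d → ℤ) := Submodule.span ℤ (colFn m a '' I) with hN
  obtain ⟨t₀, ht₀⟩ : ∃ t : Fin d, t.succ ∉ I := by
    obtain ⟨j, hj⟩ : ∃ j, j ∉ I := by
      by_contra h; push_neg at h; exact hI (Finset.eq_univ_iff_forall.mpr h)
    have hj0 : j ≠ 0 := fun h => hj (h ▸ h0)
    obtain ⟨t, rfl⟩ := Fin.eq_succ_of_ne_zero hj0
    exact ⟨t, hj⟩
  set g : ℕ := Iᶜ.gcd (aExt d a) with hg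
  obtain ⟨b, hb, hb1⟩ := Finset.extract_gcd (aExt d a) ⟨t₀.succ, Finset.mem_compl.mpr ht₀⟩
  have hab : ∀ i : Fin d, i.succ ∉ I → a i = g * b i.succ := by
    intro i hi
    have := hb i.succ (Finset.mem_compl.mpr hi)
    simpa [aExt] using this
  have habZ : ∀ i : Fin d, i.succ ∉ I → ((a i : ℤ)) = (g : ℤ) * (b i.succ : ℤ) := by
    intro i hi; exact_mod_cast congrArg (Nat.cast : ℕ → ℤ) (hab i hi)
  set w : Fin d → ℤ := fun i => if i.succ ∈ I then 0 else (b i.succ : ℤ) with hw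
  set P : ℤ := ∏ j ∈ I.erase 0, (m j : ℤ) with hP
  set nn : ℕ := (∏ i ∈ I, m i) * g with hnn
  have hg0 : g ≠ 0 := by
    intro h
    have := hab t₀ ht₀
    rw [h, zero_mul] at this
    exact (ha t₀).ne' this
  have hnn0 : nn ≠ 0 := by
    have : ∏ i ∈ I, m i ≠ 0 := Finset.prod_ne_zero_iff.mpr fun i _ => (hm i).ne'
    simp [hnn, this, hg0]
  have hnZ : ((nn : ℕ) : ℤ) = (m 0 : ℤ) * P * (g : ℤ) := by
    rw [hnn]; push_cast
    rw [← Finset.mul_prod_erase I (fun j => ((m j : ℕ) : ℤ)) h0, hP]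
  have key1' : ∀ k : ℤ, k • w ∈ N ↔ ((nn : ℤ)) ∣ k := fun k =>
    (key1 m a hcop hcop' ha h0 g b hab t₀ ht₀ k).trans (by rw [hnZ])
  set S : Finset (Fin d) := Finset.univ.filter (fun i : Fin d => i.succ ∈ I) with hS
  -- basic quotient facts
  have hmkzero : ∀ x : Fin d → ℤ, N.mkQ x = 0 ↔ x ∈ N := fun x => by
    rw [Submodule.mkQ_apply]; exact Submodule.Quotient.mk_eq_zero N
  have he : ∀ i : Fin d, i.succ ∈ I → ((m i.succ : ℤ)) • (N.mkQ (Pi.single i 1)) = 0 := by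
    intro i hi
    rw [← _root_.map_smul]
    have hsingle : (m i.succ : ℤ) • (Pi.single i 1 : Fin d → ℤ) = colFn m a i.succ := by
      rw [colFn_succ]; funext i'; simp [Pi.single_apply, mul_ite]
    rw [hsingle, hmkzero]
    exact Submodule.subset_span ⟨i.succ, Finset.mem_coe.mpr hi, rfl⟩
  -- the key relation R
  have hR : ((m 0 : ℤ) * (g : ℤ)) • N.mkQ w
      = -∑ i ∈ S, ((m 0 : ℤ) * (a i : ℤ)) • N.mkQ (Pi.single i 1) := by
    have hvec : ((m 0 : ℤ) * (g : ℤ)) • w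
        + ∑ i ∈ S, ((m 0 : ℤ) * (a i : ℤ)) • (Pi.single i 1 : Fin d → ℤ)
        = -(colFn m a 0) := by
      funext i'
      simp only [Pi.add_apply, Pi.smul_apply, smul_eq_mul, Finset.sum_apply, Pi.neg_apply]
      have hsum : ∑ i ∈ S, ((m 0 : ℤ) * (a i : ℤ)) * ((Pi.single i 1 : Fin d → ℤ) i')
          = if i' ∈ S then (m 0 : ℤ) * (a i' : ℤ) else 0 := by
        rw [Finset.sum_congr rfl (fun i _ => by
            rw [Pi.single_apply, mul_ite, mul_one, mul_zero]
            exact if_congr (eq_comm) rfl rfl :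
          ∀ i ∈ S, ((m 0 : ℤ) * (a i : ℤ)) * ((Pi.single i 1 : Fin d → ℤ) i')
            = if i = i' then (m 0 : ℤ) * (a i : ℤ) else 0)]
        exact Finset.sum_ite_eq' S i' (fun i => (m 0 : ℤ) * (a i : ℤ))
      rw [hsum]
      by_cases hi : i'.succ ∈ I
      · have hiS : i' ∈ S := Finset.mem_filter.mpr ⟨Finset.mem_univ _, hi⟩
        simp [hw, hi, hiS, colFn, shearedMatrix]
      · have hiS : i' ∉ S := fun h => hi (Finset.mem_filter.mp h).2
        simp only [hw, if_neg hi, if_neg hiS, add_zero, colFn, shearedMatrix,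
          eq_self_iff_true, if_true, neg_neg]
        rw [habZ i' hi]; ring
    have h1 := congrArg N.mkQ hvec
    rw [_root_.map_add, _root_.map_smul, _root_.map_sum] at h1
    simp only [_root_.map_smul] at h1
    have h2 : N.mkQ (-(colFn m a 0)) = 0 := by
      rw [_root_.map_neg, neg_eq_zero, hmkzero]
      exact Submodule.subset_span ⟨0, h0, rfl⟩
    rw [h2] at h1
    exact eq_neg_of_add_eq_zero_left h1
  -- every basis class e_i (i ∈ S) lies in the span of the class of w
  have hL2 : ∀ i₀ : Fin d, i₀.succ ∈ I →
      N.mkQ (Pi.single i₀ 1) ∈ Submodule.span ℤ {N.mkQ w} := by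
    intro i₀ hi₀
    set μ : ℤ := ∏ j ∈ (I.erase 0).erase i₀.succ, (m j : ℤ) with hμ
    have hsum : ∑ i ∈ S, (μ * ((m 0 : ℤ) * (a i : ℤ))) • N.mkQ (Pi.single i 1)
        = (μ * ((m 0 : ℤ) * (a i₀ : ℤ))) • N.mkQ (Pi.single i₀ 1) := by
      refine Finset.sum_eq_single_of_mem i₀
        (Finset.mem_filter.mpr ⟨Finset.mem_univ _, hi₀⟩) ?_
      intro i hiS hne
      have hiI : i.succ ∈ I := (Finset.mem_filter.mp hiS).2
      have hdvd : (m i.succ : ℤ) ∣ μ := by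
        refine Finset.dvd_prod_of_mem _ ?_
        refine Finset.mem_erase.mpr ⟨?_, Finset.mem_erase.mpr ⟨Fin.succ_ne_zero i, hiI⟩⟩
        simpa [Fin.succ_inj] using hne
      obtain ⟨e, he'⟩ := hdvd
      rw [he', show ((m i.succ : ℤ) * e) * ((m 0 : ℤ) * (a i : ℤ))
          = (e * ((m 0 : ℤ) * (a i : ℤ))) * (m i.succ : ℤ) from by ring,
        mul_smul, he i hiI, smul_zero]
    have hμR : (μ * ((m 0 : ℤ) * (g : ℤ))) • N.mkQ w
        = -((μ * ((m 0 : ℤ) * (a i₀ : ℤ))) • N.mkQ (Pi.single i₀ 1)) := by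
      rw [← hsum]
      calc (μ * ((m 0 : ℤ) * (g : ℤ))) • N.mkQ w
          = μ • (((m 0 : ℤ) * (g : ℤ)) • N.mkQ w) := by rw [← mul_smul]
        _ = μ • (-∑ i ∈ S, ((m 0 : ℤ) * (a i : ℤ)) • N.mkQ (Pi.single i 1)) := by rw [hR]
        _ = -∑ i ∈ S, (μ * ((m 0 : ℤ) * (a i : ℤ))) • N.mkQ (Pi.single i 1) := by
            rw [smul_neg, Finset.smul_sum]
            simp only [← mul_smul]
    have hcpr : IsCoprime (μ * ((m 0 : ℤ) * (a i₀ : ℤ))) ((m i₀.succ : ℤ)) := by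
      refine IsCoprime.mul_left ?_ (IsCoprime.mul_left ?_ ?_)
      · refine IsCoprime.prod_left fun j hj => ?_
        exact Nat.isCoprime_iff_coprime.mpr (hcop j i₀.succ (Finset.mem_erase.mp hj).1)
      · exact Nat.isCoprime_iff_coprime.mpr (hcop 0 i₀.succ (Fin.succ_ne_zero i₀).symm)
      · exact Nat.isCoprime_iff_coprime.mpr (hcop' i₀)
    obtain ⟨u, v, huv⟩ := hcpr
    have hid : N.mkQ (Pi.single i₀ 1)
        = u • (-((μ * ((m 0 : ℤ) * (g : ℤ))) • N.mkQ w)) := by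
      calc N.mkQ (Pi.single i₀ 1)
          = (u * (μ * ((m 0 : ℤ) * (a i₀ : ℤ))) + v * (m i₀.succ : ℤ))
              • N.mkQ (Pi.single i₀ 1) := by rw [huv, one_smul]
        _ = u • ((μ * ((m 0 : ℤ) * (a i₀ : ℤ))) • N.mkQ (Pi.single i₀ 1))
              + v • ((m i₀.succ : ℤ) • N.mkQ (Pi.single i₀ 1)) := by
            rw [add_smul, mul_smul u (μ * ((m 0 : ℤ) * (a i₀ : ℤ))),
              mul_smul v ((m i₀.succ : ℤ))]
        _ = u • ((μ * ((m 0 : ℤ) * (a i₀ : ℤ))) • N.mkQ (Pi.single i₀ 1)) := by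
            rw [he i₀ hi₀, smul_zero, add_zero]
        _ = u • (-((μ * ((m 0 : ℤ) * (g : ℤ))) • N.mkQ w)) := by rw [hμR, neg_neg]
    rw [hid]
    exact Submodule.smul_mem _ _ (Submodule.neg_mem _ (Submodule.smul_mem _ _
      (Submodule.mem_span_singleton_self _)))
  -- gcd helper
  have hdvd_helper : ∀ (k M : ℤ), (∀ j ∈ Iᶜ, k ∣ M * (b j : ℤ)) → k ∣ M := by
    intro k M h
    have h1 : k ∣ Iᶜ.gcd (fun j => M * (b j : ℤ)) := Finset.dvd_gcd h
    rw [Finset.gcd_mul_left, gcd_natCast Iᶜ b, hb1] at h1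
    simp only [Nat.cast_one, mul_one] at h1
    exact (dvd_normalize_iff).mp h1
  -- the torsion submodule is the span of the class of w
  have htor : Submodule.torsion ℤ ((Fin d → ℤ) ⧸ N) = Submodule.span ℤ {N.mkQ w} := by
    apply le_antisymm
    · intro x' hx'
      obtain ⟨⟨k, hk⟩, hkx⟩ := (Submodule.mem_torsion_iff x').mp hx'
      obtain ⟨x, rfl⟩ := N.mkQ_surjective x'
      have hk0 : k ≠ 0 := mem_nonZeroDivisors_iff_ne_zero.mp hk
      have hxN : k • x ∈ N := by
        rw [← hmkzero, _root_.map_smul]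
        exact hkx
      obtain ⟨c, hc⟩ := (mem_span_iff m a h0 (k • x)).mp hxN
      set M : ℤ := -(c 0 * (m 0 : ℤ) * (g : ℤ)) with hM
      have hkM : k ∣ M := by
        apply hdvd_helper
        intro j hj
        have hjI : j ∉ I := Finset.mem_compl.mp hj
        have hj0 : j ≠ 0 := fun h => hjI (h ▸ h0)
        obtain ⟨t, rfl⟩ := Fin.eq_succ_of_ne_zero hj0
        have h1 := hc t
        simp only [Pi.smul_apply, smul_eq_mul, if_neg hjI, add_zero] at h1
        refine ⟨x t, ?_⟩
        calc M * (b t.succ : ℤ)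
            = -(c 0 * ((m 0 : ℤ) * ((g : ℤ) * (b t.succ : ℤ)))) := by rw [hM]; ring
          _ = -(c 0 * ((m 0 : ℤ) * (a t : ℤ))) := by rw [habZ t hjI]
          _ = k * x t := h1.symm
      obtain ⟨μ, hμ⟩ := hkM
      have hxt : ∀ t : Fin d, t.succ ∉ I → x t = μ * (b t.succ : ℤ) := by
        intro t ht
        have h1 := hc t
        simp only [Pi.smul_apply, smul_eq_mul, if_neg ht, add_zero] at h1
        apply mul_left_cancel₀ hk0
        calc k * x t = -(c 0 * ((m 0 : ℤ) * (a t : ℤ))) := h1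
          _ = -(c 0 * ((m 0 : ℤ) * ((g : ℤ) * (b t.succ : ℤ)))) := by rw [habZ t ht]
          _ = M * (b t.succ : ℤ) := by rw [hM]; ring
          _ = k * (μ * (b t.succ : ℤ)) := by rw [hμ]; ring
      have hy : x - μ • w = ∑ i ∈ S, (x i - μ * w i) • (Pi.single i 1 : Fin d → ℤ) := by
        funext i'
        rw [Finset.sum_apply]
        rw [Finset.sum_congr rfl (fun i _ => by
            rw [Pi.smul_apply, smul_eq_mul, Pi.single_apply, mul_ite, mul_one, mul_zero]
            exact if_congr (eq_comm) rfl rfl :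
          ∀ i ∈ S, ((x i - μ * w i) • (Pi.single i 1 : Fin d → ℤ)) i'
            = if i = i' then x i - μ * w i else 0),
          Finset.sum_ite_eq' S i' (fun i => x i - μ * w i)]
        by_cases hi : i'.succ ∈ I
        · have hiS : i' ∈ S := Finset.mem_filter.mpr ⟨Finset.mem_univ _, hi⟩
          simp [hiS]
        · have hiS : i' ∉ S := fun h => hi (Finset.mem_filter.mp h).2
          rw [if_neg hiS]
          simp only [Pi.sub_apply, Pi.smul_apply, smul_eq_mul, hw]
          rw [if_neg hi, hxt i' hi]
          ring
      have hdecomp : N.mkQ x = μ • N.mkQ w + ∑ i ∈ S, (x i - μ * w i) • N.mkQ (Pi.single i 1) := by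
        have := congrArg N.mkQ hy
        rw [map_sub, _root_.map_smul, _root_.map_sum] at this
        simp only [_root_.map_smul] at this
        rw [sub_eq_iff_eq_add] at this
        rw [this]
        ring_nf
        rw [add_comm]
      rw [hdecomp]
      exact Submodule.add_mem _
        (Submodule.smul_mem _ _ (Submodule.mem_span_singleton_self _))
        (Submodule.sum_mem _ fun i hi => Submodule.smul_mem _ _
          (hL2 i (Finset.mem_filter.mp hi).2))
    · rw [Submodule.span_le]
      rintro _ rfl
      refine (Submodule.mem_torsion_iff _).mpr
        ⟨⟨(nn : ℤ), mem_nonZeroDivisors_of_ne_zero (by exact_mod_cast hnn0)⟩, ?_⟩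
      show ((nn : ℤ)) • N.mkQ w = 0
      rw [← _root_.map_smul, hmkzero]
      exact (key1' (nn : ℤ)).mpr dvd_rfl
  -- assemble the equivalence
  set φ : ℤ →ₗ[ℤ] ((Fin d → ℤ) ⧸ N) := LinearMap.toSpanSingleton ℤ _ (N.mkQ w) with hφ
  have hker : LinearMap.ker φ = (Ideal.span {((nn : ℕ) : ℤ)} : Ideal ℤ) := by
    ext k
    rw [LinearMap.mem_ker, Ideal.mem_span_singleton]
    show k • N.mkQ w = 0 ↔ _
    rw [← _root_.map_smul, hmkzero]
    exact key1' k
  have e1 : (Submodule.torsion ℤ ((Fin d → ℤ) ⧸ N)) ≃ₗ[ℤ] (ℤ ⧸ LinearMap.ker φ) :=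
    (LinearEquiv.ofEq _ _ (htor.trans (LinearMap.span_singleton_eq_range ℤ _ (N.mkQ w)))).trans
      φ.quotKerEquivRange.symm
  have e2 : (ℤ ⧸ LinearMap.ker φ) ≃ₗ[ℤ] (ℤ ⧸ (Ideal.span {((nn : ℕ) : ℤ)} : Ideal ℤ)) :=
    Submodule.quotEquivOfEq _ _ hker
  exact ⟨(e1.trans e2).toAddEquiv.trans (Int.quotientSpanNatEquivZMod nn).toAddEquiv⟩
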